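/- Let α ∈ (1,2), T > 0, L > 0, and let f : [0,T] × ℝ → ℝ be continuous with |f(t,x) − f(t,y)| ≤ L|x − y| for all t and x, y. Let y₁, y₂ : [0,T] → ℝ be continuous and satisfy yₖ(t) = y_{k,0} + y_{k,1} t + (1/Γ(α)) ∫₀ᵗ (t−s)^{α−1} f(s, yₖ(s)) ds for k = 1, 2. Suppose T* ∈ (0,T] is such that for all t ∈ [0,T*]: (y_{2,0} − y_{1,0}) E_{α,1}(−L t^α) + (y_{2,1} − y_{1,1}) t E_{α,2}(−L t^α) > 0 and E_{α,α}(−L t^α) > 0. Then y₁(t) < y₂(t) for all t ∈ [0,T*]. -/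

import Mathlib

open Nat


/-- The two-parameter Mittag-Leffler function `E_{α,β}(z) = ∑ₖ zᵏ / Γ(αk + β)`. -/
noncomputable def mlE (α β z : ℝ) : ℝ := ∑' k : ℕ, z ^ k / Real.Gamma (α * k + β)


noncomputable def mlF (α β L τ : ℝ) : ℝ :=
  ∑' n : ℕ, (-L) ^ n * τ ^ (α * n + β - 1) / Real.Gamma (α * n + β)

lemma rpow_split {t α β : ℝ} (ht : 0 < t) (n : ℕ) :
    t ^ (α * n + β - 1) = (t ^ α) ^ n * t ^ (β - 1) := by
  rw [← Real.rpow_natCast (t ^ α) n, ← Real.rpow_mul ht.le, ← Real.rpow_add ht]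
  ring_nf

lemma gamma_arg_pos {α β : ℝ} (hα : 1 < α) (hβ : 1 ≤ β) (n : ℕ) : 0 < α * n + β := by
  have : (0:ℝ) ≤ α * n := by positivity
  linarith

lemma gamma_ge_factorial {α β : ℝ} (hα : 1 < α) (hβ : 1 ≤ β) (n : ℕ) (hn : 1 ≤ n) :
    (n ! : ℝ) ≤ Real.Gamma (α * n + β) := by
  have h1 : ((n:ℝ) + 1) ≤ α * n + β := by
    have : (1:ℝ) ≤ n := by exact_mod_cast hn
    nlinarith
  have h2 : (2:ℝ) ≤ (n:ℝ) + 1 := by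
    have : (1:ℝ) ≤ n := by exact_mod_cast hn
    linarith
  calc (n ! : ℝ) = Real.Gamma (n + 1) := (Real.Gamma_nat_eq_factorial n).symm
    _ ≤ Real.Gamma (α * n + β) := by
        rcases eq_or_lt_of_le h1 with h | h
        · rw [h]
        · exact le_of_lt (Real.Gamma_strictMonoOn_Ici h2 (le_trans h2 h1) h)

lemma summable_ml_aux {α β : ℝ} (hα : 1 < α) (hβ : 1 ≤ β) {C t : ℝ} (hC : 0 ≤ C)
    (ht : 0 ≤ t) :
    Summable (fun n : ℕ => C ^ n * t ^ (α * n + β - 1) / Real.Gamma (α * n + β)) := by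
  rcases eq_or_lt_of_le ht with h0 | ht
  · -- t = 0 : all terms with n ≥ 1 vanish
    apply summable_of_ne_finset_zero (s := {0})
    intro n hn
    have hn1 : 1 ≤ n := Nat.one_le_iff_ne_zero.mpr (by simpa using hn)
    have : α * n + β - 1 ≠ 0 := by
      have : (1:ℝ) ≤ n := by exact_mod_cast hn1
      nlinarith
    rw [← h0, Real.zero_rpow this]
    simp
  · rw [← summable_nat_add_iff 1]
    have hsum : Summable (fun n : ℕ => t ^ (β - 1) * ((C * t ^ α) ^ (n + 1) / ((n + 1)! : ℝ))) := by
      apply Summable.mul_left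
      exact (summable_nat_add_iff 1).mpr (Real.summable_pow_div_factorial (C * t ^ α))
    apply Summable.of_nonneg_of_le _ _ hsum
    · intro n
      have := Real.Gamma_pos_of_pos (gamma_arg_pos hα hβ (n + 1))
      positivity
    · intro n
      have hg := gamma_ge_factorial hα hβ (n + 1) (Nat.le_add_left 1 n)
      have hgpos := Real.Gamma_pos_of_pos (gamma_arg_pos hα hβ (n + 1))
      have hfac : (0:ℝ) < ((n+1)! : ℝ) := by positivity
      rw [rpow_split ht (n + 1)]
      have hX : (0:ℝ) ≤ C ^ (n+1) * ((t ^ α) ^ (n+1) * t ^ (β-1)) := by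
        have := Real.rpow_nonneg ht.le α
        have := Real.rpow_nonneg ht.le (β-1)
        positivity
      have hrhs : t ^ (β-1) * ((C * t ^ α) ^ (n+1) / ((n+1)! : ℝ))
          = C ^ (n+1) * ((t ^ α) ^ (n+1) * t ^ (β-1)) / ((n+1)! : ℝ) := by
        rw [mul_pow]; ring
      rw [hrhs]
      exact div_le_div_of_nonneg_left hX hfac hg

lemma summable_mlF {α β L t : ℝ} (hα : 1 < α) (hβ : 1 ≤ β) (ht : 0 ≤ t) :
    Summable (fun n : ℕ => (-L) ^ n * t ^ (α * n + β - 1) / Real.Gamma (α * n + β)) := by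
  apply Summable.of_norm
  have h := summable_ml_aux hα hβ (abs_nonneg L) ht
  apply Summable.of_nonneg_of_le (fun n => norm_nonneg _) _ h
  intro n
  have hg := Real.Gamma_pos_of_pos (gamma_arg_pos hα hβ n)
  have htr : (0:ℝ) ≤ t ^ (α * n + β - 1) := Real.rpow_nonneg ht _
  rw [Real.norm_eq_abs, abs_div, abs_mul, abs_pow, abs_neg, abs_of_nonneg htr,
    abs_of_pos hg]

lemma mlF_eq_mlE {α β L t : ℝ} (ht : 0 < t) :
    mlF α β L t = t ^ (β - 1) * mlE α β (-(L * t ^ α)) := by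
  rw [mlF, mlE, ← tsum_mul_left]
  apply tsum_congr
  intro n
  rw [rpow_split ht n]
  have : (-(L * t ^ α)) ^ n = (-L) ^ n * (t ^ α) ^ n := by
    rw [← neg_mul, mul_pow]
  rw [this]
  ring

lemma mlF_zero {α β L : ℝ} (hα : 1 < α) (hβ : 1 < β) : mlF α β L 0 = 0 := by
  rw [mlF]
  convert tsum_zero with n
  have hne : α * n + β - 1 ≠ 0 := by
    have : (0:ℝ) ≤ α * n := by positivity
    nlinarith
  rw [Real.zero_rpow hne]
  simp

lemma mlF_one_zero {α L : ℝ} (hα : 1 < α) : mlF α 1 L 0 = 1 := by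
  rw [mlF]
  rw [tsum_eq_single 0 ?_]
  · norm_num [Real.Gamma_one]
  · intro n hn
    have hn1 : 1 ≤ n := Nat.one_le_iff_ne_zero.mpr hn
    have hne : α * n + 1 - 1 ≠ 0 := by
      have : (1:ℝ) ≤ n := by exact_mod_cast hn1
      nlinarith
    rw [Real.zero_rpow hne]
    simp

lemma mlF_shift {α β L t : ℝ} (hα : 1 < α) (hβ : 1 ≤ β) (ht : 0 ≤ t) :
    L * mlF α (β + α) L t = t ^ (β - 1) / Real.Gamma β - mlF α β L t := by
  have hsum := summable_mlF (L := L) hα hβ ht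
  have h0 : mlF α β L t
      = t ^ (β - 1) / Real.Gamma β
        + ∑' n : ℕ, (-L) ^ (n+1) * t ^ (α * (n+1) + β - 1) / Real.Gamma (α * (n+1) + β) := by
    rw [mlF, hsum.tsum_eq_zero_add]
    norm_num
  have h1 : ∀ n : ℕ, (-L) ^ (n+1) * t ^ (α * (n+1) + β - 1) / Real.Gamma (α * (n+1) + β)
      = -L * ((-L) ^ n * t ^ (α * n + (β + α) - 1) / Real.Gamma (α * n + (β + α))) := by
    intro n
    have e1 : α * ((n:ℝ)+1) + β - 1 = α * n + (β + α) - 1 := by push_cast; ring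
    have e2 : α * ((n:ℝ)+1) + β = α * n + (β + α) := by push_cast; ring
    push_cast
    rw [e1, e2, pow_succ]
    ring
  rw [h0]
  have : ∑' n : ℕ, (-L) ^ (n+1) * t ^ (α * (n+1) + β - 1) / Real.Gamma (α * (n+1) + β)
      = -L * mlF α (β + α) L t := by
    rw [mlF, ← tsum_mul_left]
    exact tsum_congr h1
  rw [this]
  ring

lemma mlF_contOn {α β L M : ℝ} (hα : 1 < α) (hβ : 1 ≤ β) (hM : 0 ≤ M) :
    ContinuousOn (mlF α β L) (Set.Icc 0 M) := by
  have hterm : ∀ n : ℕ, Continuous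
      (fun τ : ℝ => (-L) ^ n * τ ^ (α * n + β - 1) / Real.Gamma (α * n + β)) := by
    intro n
    have hexp : (0:ℝ) ≤ α * n + β - 1 := by
      have : (0:ℝ) ≤ α * n := by positivity
      linarith
    exact (continuous_const.mul (Real.continuous_rpow_const hexp)).div_const _
  have hu := summable_ml_aux (β := β) hα hβ (abs_nonneg L) hM
  apply continuousOn_tsum (fun n => (hterm n).continuousOn) hu
  intro n x hx
  have hg := Real.Gamma_pos_of_pos (gamma_arg_pos hα hβ n)
  have hexp : (0:ℝ) ≤ α * n + β - 1 := by
    have : (0:ℝ) ≤ α * n := by positivity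
    linarith
  have hxr : (0:ℝ) ≤ x ^ (α * n + β - 1) := Real.rpow_nonneg hx.1 _
  rw [Real.norm_eq_abs, abs_div, abs_mul, abs_pow, abs_neg, abs_of_nonneg hxr, abs_of_pos hg]
  have := Real.rpow_le_rpow hx.1 hx.2 hexp
  gcongr

lemma betaR {p q : ℝ} (hp : 0 < p) (hq : 0 < q) :
    ∫ x in (0:ℝ)..1, (1 - x) ^ (p - 1) * x ^ (q - 1)
      = Real.Gamma p * Real.Gamma q / Real.Gamma (p + q) := by
  have key := Complex.Gamma_mul_Gamma_eq_betaIntegral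
    (s := (q:ℂ)) (t := (p:ℂ)) (by simpa using hq) (by simpa using hp)
  have hbeta : Complex.betaIntegral (q:ℂ) (p:ℂ)
      = ((∫ x in (0:ℝ)..1, (1 - x) ^ (p - 1) * x ^ (q - 1) : ℝ) : ℂ) := by
    rw [Complex.betaIntegral]
    rw [← intervalIntegral.integral_ofReal]
    apply intervalIntegral.integral_congr
    intro x hx
    rw [Set.uIcc_of_le (by norm_num : (0:ℝ) ≤ 1)] at hx
    have hx0 : (0:ℝ) ≤ x := hx.1
    have hx1 : (0:ℝ) ≤ 1 - x := by linarith [hx.2]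
    dsimp only
    rw [Complex.ofReal_mul, Complex.ofReal_cpow hx1 (p-1), Complex.ofReal_cpow hx0 (q-1)]
    push_cast
    ring
  rw [hbeta] at key
  have hqp : (q:ℂ) + (p:ℂ) = ((q + p : ℝ) : ℂ) := by push_cast; ring
  rw [hqp, Complex.Gamma_ofReal, Complex.Gamma_ofReal, Complex.Gamma_ofReal] at key
  have key2 : Real.Gamma q * Real.Gamma p
      = Real.Gamma (q + p) * ∫ x in (0:ℝ)..1, (1 - x) ^ (p - 1) * x ^ (q - 1) := by
    exact_mod_cast key
  have hGpos := Real.Gamma_pos_of_pos (by linarith : 0 < p + q)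
  rw [add_comm q p] at key2
  field_simp
  linarith [key2]

lemma betaScaled {p q : ℝ} (hp : 0 < p) (hq : 0 < q) {t : ℝ} (ht : 0 < t) :
    ∫ s in (0:ℝ)..t, (t - s) ^ (p - 1) * s ^ (q - 1)
      = Real.Gamma p * Real.Gamma q / Real.Gamma (p + q) * t ^ (p + q - 1) := by
  have hsub := intervalIntegral.integral_comp_mul_left
    (a := (0:ℝ)) (b := (1:ℝ)) (c := t)
    (f := fun s => (t - s) ^ (p - 1) * s ^ (q - 1)) (ne_of_gt ht)
  simp only [mul_zero, mul_one, smul_eq_mul] at hsub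
  have heq : ∫ x in (0:ℝ)..1, (t - t * x) ^ (p - 1) * (t * x) ^ (q - 1)
      = t ^ (p + q - 2) * ∫ x in (0:ℝ)..1, (1 - x) ^ (p - 1) * x ^ (q - 1) := by
    rw [← intervalIntegral.integral_const_mul]
    apply intervalIntegral.integral_congr
    intro x hx
    rw [Set.uIcc_of_le (by norm_num : (0:ℝ) ≤ 1)] at hx
    have hx0 : (0:ℝ) ≤ x := hx.1
    have hx1 : (0:ℝ) ≤ 1 - x := by linarith [hx.2]
    simp only
    have e1 : t - t * x = t * (1 - x) := by ring
    rw [e1, Real.mul_rpow ht.le hx1, Real.mul_rpow ht.le hx0]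
    rw [show t ^ (p-1) * (1-x)^(p-1) * (t^(q-1) * x^(q-1))
        = (t^(p-1) * t^(q-1)) * ((1-x)^(p-1) * x^(q-1)) by ring]
    rw [← Real.rpow_add ht]
    congr 2
    ring
  rw [heq, betaR hp hq] at hsub
  have hpow : t * t ^ (p + q - 2) = t ^ (p + q - 1) := by
    nth_rewrite 1 [← Real.rpow_one t]
    rw [← Real.rpow_add ht]
    congr 1
    ring
  have := hsub.symm
  rw [inv_mul_eq_iff_eq_mul₀ (ne_of_gt ht)] at this
  rw [this, ← hpow]
  ring

lemma term_cont {α β L : ℝ} (hα : 1 < α) (hβ : 1 ≤ β) (n : ℕ) :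
    Continuous (fun s : ℝ => (-L) ^ n * s ^ (α * n + β - 1) / Real.Gamma (α * n + β)) := by
  have hexp : (0:ℝ) ≤ α * n + β - 1 := by
    have : (0:ℝ) ≤ α * n := by positivity
    linarith
  exact (continuous_const.mul (Real.continuous_rpow_const hexp)).div_const _

lemma master {α β γ L t : ℝ} (hα : 1 < α) (hβ : 1 ≤ β) (hγ : 1 ≤ γ) (ht : 0 ≤ t) :
    ∫ s in (0:ℝ)..t, (t - s) ^ (γ - 1) * mlF α β L s
      = Real.Gamma γ * mlF α (β + γ) L t := by
  rcases ht.eq_or_lt with h0 | ht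
  · rw [← h0, intervalIntegral.integral_same, mlF_zero hα (by linarith), mul_zero]
  have hγ0 : (0:ℝ) ≤ γ - 1 := by linarith
  have hβγ : (1:ℝ) ≤ β + γ := by linarith
  set F : ℕ → ℝ → ℝ := fun n s =>
    (t - s) ^ (γ - 1) * ((-L) ^ n * s ^ (α * n + β - 1) / Real.Gamma (α * n + β)) with hF
  have hFcont : ∀ n, Continuous (F n) := by
    intro n
    exact ((continuous_const.sub continuous_id).rpow_const
      (fun x => Or.inr hγ0)).mul (term_cont hα hβ n)
  have hFint : ∀ n, MeasureTheory.Integrable (F n)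
      (MeasureTheory.volume.restrict (Set.Ioc 0 t)) := by
    intro n
    exact (hFcont n).integrableOn_Ioc
  -- value of the integral of each term
  have hval : ∀ n : ℕ, ∫ s in Set.Ioc (0:ℝ) t, F n s
      = Real.Gamma γ * ((-L) ^ n * t ^ (α * n + (β + γ) - 1) / Real.Gamma (α * n + (β + γ))) := by
    intro n
    have hq : (0:ℝ) < α * n + β := gamma_arg_pos hα hβ n
    have hb := betaScaled (p := γ) (q := α * n + β) (by linarith) hq ht
    rw [← intervalIntegral.integral_of_le ht.le]
    have : ∫ s in (0:ℝ)..t, F n s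
        = ((-L) ^ n / Real.Gamma (α * n + β)) * ∫ s in (0:ℝ)..t,
            (t - s) ^ (γ - 1) * s ^ ((α * n + β) - 1) := by
      rw [← intervalIntegral.integral_const_mul]
      apply intervalIntegral.integral_congr
      intro s _
      simp only [hF]
      ring_nf
    rw [this, hb]
    have hgq := Real.Gamma_pos_of_pos hq
    have e1 : γ + (α * n + β) - 1 = α * n + (β + γ) - 1 := by ring
    have e2 : γ + (α * n + β) = α * n + (β + γ) := by ring
    rw [e1, e2]
    field_simp
  -- norm integrals and their summability
  have hnorm : ∀ n : ℕ, ∫ s in Set.Ioc (0:ℝ) t, ‖F n s‖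
      = Real.Gamma γ * (|L| ^ n * t ^ (α * n + (β + γ) - 1) / Real.Gamma (α * n + (β + γ))) := by
    intro n
    have hq : (0:ℝ) < α * n + β := gamma_arg_pos hα hβ n
    have hgq := Real.Gamma_pos_of_pos hq
    have hb := betaScaled (p := γ) (q := α * n + β) (by linarith) hq ht
    have heq : ∀ s ∈ Set.Ioc (0:ℝ) t, ‖F n s‖
        = (|L| ^ n / Real.Gamma (α * n + β)) * ((t - s) ^ (γ - 1) * s ^ ((α * n + β) - 1)) := by
      intro s hs
      have h1 : (0:ℝ) ≤ (t - s) ^ (γ - 1) := Real.rpow_nonneg (by linarith [hs.2]) _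
      have h2 : (0:ℝ) ≤ s ^ (α * n + β - 1) := Real.rpow_nonneg hs.1.le _
      simp only [hF, Real.norm_eq_abs, abs_mul, abs_div, abs_pow, abs_neg,
        abs_of_nonneg h1, abs_of_nonneg h2, abs_of_pos hgq]
      ring_nf
    rw [MeasureTheory.setIntegral_congr_fun measurableSet_Ioc heq,
      MeasureTheory.integral_const_mul, ← intervalIntegral.integral_of_le ht.le, hb]
    have e1 : γ + (α * n + β) - 1 = α * n + (β + γ) - 1 := by ring
    have e2 : γ + (α * n + β) = α * n + (β + γ) := by ring
    rw [e1, e2]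
    field_simp
  have hsum : Summable (fun n : ℕ => ∫ s in Set.Ioc (0:ℝ) t, ‖F n s‖) := by
    rw [summable_congr hnorm]
    exact (summable_ml_aux hα hβγ (abs_nonneg L) ht.le).mul_left _
  have swap := MeasureTheory.integral_tsum_of_summable_integral_norm hFint hsum
  have lhs_eq : ∫ s in (0:ℝ)..t, (t - s) ^ (γ - 1) * mlF α β L s
      = ∫ s in Set.Ioc (0:ℝ) t, ∑' n, F n s := by
    rw [intervalIntegral.integral_of_le ht.le]
    apply MeasureTheory.setIntegral_congr_fun measurableSet_Ioc
    intro s _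
    simp only [hF, mlF]
    exact (tsum_mul_left).symm
  rw [lhs_eq, ← swap]
  rw [show (fun n => ∫ s in Set.Ioc (0:ℝ) t, F n s)
      = fun n : ℕ => Real.Gamma γ * ((-L) ^ n * t ^ (α * n + (β + γ) - 1)
          / Real.Gamma (α * n + (β + γ))) from funext hval]
  rw [tsum_mul_left, mlF]

open MeasureTheory in
lemma fubini_tri {t₀ p : ℝ} (ht₀ : 0 < t₀) (hp : 0 < p) {phi g : ℝ → ℝ}
    (hphi : ContinuousOn phi (Set.Icc 0 t₀)) (hg : ContinuousOn g (Set.Icc 0 t₀)) :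
    ∫ s in (0:ℝ)..t₀, phi s * ∫ u in (0:ℝ)..s, (s - u) ^ p * g u
      = ∫ u in (0:ℝ)..t₀, (∫ s in u..t₀, phi s * (s - u) ^ p) * g u := by
  set μ := MeasureTheory.volume.restrict (Set.Ioc (0:ℝ) t₀) with hμ
  set H : ℝ → ℝ → ℝ := fun s u => if u ≤ s then phi s * (s - u) ^ p * g u else 0 with hH
  have hrpow_cont : Continuous (fun x : ℝ => x ^ p) := Real.continuous_rpow_const hp.le
  -- Integrability of uncurried H on the product
  have hK : MeasurableSet (Set.Ioc (0:ℝ) t₀ ×ˢ Set.Ioc (0:ℝ) t₀) :=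
    measurableSet_Ioc.prod measurableSet_Ioc
  have hGcont : ContinuousOn (fun q : ℝ × ℝ => phi q.1 * (q.1 - q.2) ^ p * g q.2)
      (Set.Icc 0 t₀ ×ˢ Set.Icc 0 t₀) := by
    apply ContinuousOn.mul
    apply ContinuousOn.mul
    · exact hphi.comp continuous_fst.continuousOn (fun q hq => hq.1)
    · exact ((hrpow_cont.comp (continuous_fst.sub continuous_snd)).continuousOn)
    · exact hg.comp continuous_snd.continuousOn (fun q hq => hq.2)
  obtain ⟨C, hC⟩ := (isCompact_Icc.prod isCompact_Icc).exists_bound_of_continuousOn hGcont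
  have hHint : Integrable (Function.uncurry H) (μ.prod μ) := by
    rw [hμ, MeasureTheory.Measure.prod_restrict]
    have hmeasD : MeasurableSet {q : ℝ × ℝ | q.2 ≤ q.1} :=
      measurableSet_le measurable_snd measurable_fst
    have hgsm : AEStronglyMeasurable (fun q : ℝ × ℝ => phi q.1 * (q.1 - q.2) ^ p * g q.2)
        (MeasureTheory.volume.restrict (Set.Ioc (0:ℝ) t₀ ×ˢ Set.Ioc (0:ℝ) t₀)) := by
      apply AEStronglyMeasurable.mono_measure
        (hGcont.aestronglyMeasurable (measurableSet_Icc.prod measurableSet_Icc))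
      exact MeasureTheory.Measure.restrict_mono
        (Set.prod_mono Set.Ioc_subset_Icc_self Set.Ioc_subset_Icc_self) le_rfl
    have huncurry : Function.uncurry H
        = fun q : ℝ × ℝ => Set.indicator {q : ℝ × ℝ | q.2 ≤ q.1}
            (fun q => phi q.1 * (q.1 - q.2) ^ p * g q.2) q := by
      funext q
      simp only [Function.uncurry, hH, Set.indicator, Set.mem_setOf_eq]
    rw [huncurry]
    apply MeasureTheory.Integrable.mono'
      (g := fun _ => |C|) ((integrableOn_const_iff).mpr (Or.inr ?_))
      (hgsm.indicator hmeasD) ?_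
    · exact lt_of_le_of_lt (MeasureTheory.measure_mono
        (Set.prod_mono Set.Ioc_subset_Icc_self Set.Ioc_subset_Icc_self))
        (isCompact_Icc.prod isCompact_Icc).measure_lt_top
    · filter_upwards [MeasureTheory.ae_restrict_mem hK] with q hq
      rw [norm_indicator_eq_indicator_norm]
      have hqK : q ∈ Set.Icc (0:ℝ) t₀ ×ˢ Set.Icc (0:ℝ) t₀ :=
        ⟨Set.Ioc_subset_Icc_self hq.1, Set.Ioc_subset_Icc_self hq.2⟩
      calc Set.indicator _ (fun q => ‖phi q.1 * (q.1 - q.2) ^ p * g q.2‖) q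
          ≤ ‖phi q.1 * (q.1 - q.2) ^ p * g q.2‖ :=
            Set.indicator_le_self' (fun _ _ => norm_nonneg _) q
        _ ≤ C := hC q hqK
        _ ≤ |C| := le_abs_self C
  have swap := MeasureTheory.integral_integral_swap hHint
  -- evaluate inner integrals: left side
  have hleft : ∀ s ∈ Set.Ioc (0:ℝ) t₀,
      (∫ u, H s u ∂μ) = phi s * ∫ u in (0:ℝ)..s, (s - u) ^ p * g u := by
    intro s hs
    have hs0 : (0:ℝ) ≤ s := hs.1.le
    have hsplit : Set.Ioc (0:ℝ) s ∪ Set.Ioc s t₀ = Set.Ioc (0:ℝ) t₀ :=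
      Set.Ioc_union_Ioc_eq_Ioc hs0 hs.2
    have hint1 : IntegrableOn (H s) (Set.Ioc 0 s) := by
      apply MeasureTheory.IntegrableOn.congr_fun
        (f := fun u => phi s * (s - u) ^ p * g u) ?_ ?_ measurableSet_Ioc
      · apply MeasureTheory.IntegrableOn.mono_set ?_ Set.Ioc_subset_Icc_self
        apply ContinuousOn.integrableOn_Icc
        apply ContinuousOn.mul
        · exact (continuous_const.mul
            (hrpow_cont.comp (continuous_const.sub continuous_id))).continuousOn
        · exact hg.mono (Set.Icc_subset_Icc le_rfl hs.2)
      · intro u hu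
        simp only [hH, if_pos hu.2]
    have hint2 : IntegrableOn (H s) (Set.Ioc s t₀) := by
      apply MeasureTheory.IntegrableOn.congr_fun (f := fun _ => (0:ℝ))
        (MeasureTheory.integrableOn_zero) ?_ measurableSet_Ioc
      intro u hu
      simp only [hH, if_neg (not_le.mpr hu.1)]
    have : (∫ u, H s u ∂μ) = (∫ u in Set.Ioc (0:ℝ) s, H s u)
        + ∫ u in Set.Ioc s t₀, H s u := by
      rw [hμ, ← hsplit]
      exact MeasureTheory.setIntegral_union (Set.Ioc_disjoint_Ioc_of_le le_rfl) measurableSet_Ioc hint1 hint2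
    rw [this]
    have h2 : (∫ u in Set.Ioc s t₀, H s u) = 0 := by
      rw [MeasureTheory.setIntegral_congr_fun measurableSet_Ioc
        (g := fun _ => (0:ℝ))
        (fun u hu => by simp only [hH, if_neg (not_le.mpr hu.1)])]
      simp
    have h1 : (∫ u in Set.Ioc (0:ℝ) s, H s u)
        = phi s * ∫ u in (0:ℝ)..s, (s - u) ^ p * g u := by
      rw [MeasureTheory.setIntegral_congr_fun measurableSet_Ioc
        (g := fun u => phi s * ((s - u) ^ p * g u))
        (fun u hu => by simp only [hH, if_pos hu.2]; ring)]
      rw [MeasureTheory.integral_const_mul, ← intervalIntegral.integral_of_le hs0]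
    rw [h1, h2, add_zero]
  -- evaluate inner integrals: right side
  have hright : ∀ u ∈ Set.Ioc (0:ℝ) t₀,
      (∫ s, H s u ∂μ) = (∫ s in u..t₀, phi s * (s - u) ^ p) * g u := by
    intro u hu
    have hu0 : (0:ℝ) ≤ u := hu.1.le
    have hsplit : Set.Ioc (0:ℝ) u ∪ Set.Ioc u t₀ = Set.Ioc (0:ℝ) t₀ :=
      Set.Ioc_union_Ioc_eq_Ioc hu0 hu.2
    have hzero : ∀ s ∈ Set.Ioc (0:ℝ) u, H s u = 0 := by
      intro s hs
      by_cases h : u ≤ s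
      · have : s = u := le_antisymm hs.2 h
        simp [hH, this, Real.zero_rpow (ne_of_gt hp)]
      · simp [hH, if_neg h]
    have hint1 : IntegrableOn (fun s => H s u) (Set.Ioc 0 u) := by
      apply MeasureTheory.IntegrableOn.congr_fun (f := fun _ => (0:ℝ))
        (MeasureTheory.integrableOn_zero) (fun s hs => (hzero s hs).symm) measurableSet_Ioc
    have hint2 : IntegrableOn (fun s => H s u) (Set.Ioc u t₀) := by
      apply MeasureTheory.IntegrableOn.congr_fun
        (f := fun s => phi s * (s - u) ^ p * g u) ?_ ?_ measurableSet_Ioc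
      · apply MeasureTheory.IntegrableOn.mono_set ?_ Set.Ioc_subset_Icc_self
        apply ContinuousOn.integrableOn_Icc
        apply ContinuousOn.mul
        apply ContinuousOn.mul
        · exact hphi.mono (Set.Icc_subset_Icc hu0 le_rfl)
        · exact (hrpow_cont.comp (continuous_id.sub continuous_const)).continuousOn
        · exact continuousOn_const
      · intro s hs
        simp only [hH, if_pos hs.1.le]
    have : (∫ s, H s u ∂μ) = (∫ s in Set.Ioc (0:ℝ) u, H s u)
        + ∫ s in Set.Ioc u t₀, H s u := by
      rw [hμ, ← hsplit]
      exact MeasureTheory.setIntegral_union (Set.Ioc_disjoint_Ioc_of_le le_rfl) measurableSet_Ioc hint1 hint2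
    rw [this]
    have h1 : (∫ s in Set.Ioc (0:ℝ) u, H s u) = 0 := by
      rw [MeasureTheory.setIntegral_congr_fun measurableSet_Ioc
        (g := fun _ => (0:ℝ)) hzero]
      simp
    have h2 : (∫ s in Set.Ioc u t₀, H s u)
        = (∫ s in u..t₀, phi s * (s - u) ^ p) * g u := by
      rw [MeasureTheory.setIntegral_congr_fun measurableSet_Ioc
        (g := fun s => (phi s * (s - u) ^ p) * g u)
        (fun s hs => by simp only [hH, if_pos hs.1.le])]
      rw [MeasureTheory.integral_mul_const, ← intervalIntegral.integral_of_le hu.2]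
    rw [h1, h2, zero_add]
  -- assemble
  rw [intervalIntegral.integral_of_le ht₀.le, intervalIntegral.integral_of_le ht₀.le]
  calc ∫ s in Set.Ioc (0:ℝ) t₀, phi s * ∫ u in (0:ℝ)..s, (s - u) ^ p * g u
      = ∫ s, (∫ u, H s u ∂μ) ∂μ := by
        rw [hμ]
        exact (MeasureTheory.setIntegral_congr_fun measurableSet_Ioc
          (fun s hs => (hleft s hs))).symm
    _ = ∫ u, (∫ s, H s u ∂μ) ∂μ := swap
    _ = ∫ u in Set.Ioc (0:ℝ) t₀, (∫ s in u..t₀, phi s * (s - u) ^ p) * g u := by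
        rw [hμ]
        exact MeasureTheory.setIntegral_congr_fun measurableSet_Ioc
          (fun u hu => (hright u hu))


set_option maxHeartbeats 2000000 in
/-- Separation theorem (Theorem 2.4 of the paper): under positivity conditions on
certain Mittag-Leffler functions on `[0,T*]`, two solutions of the same equation
remain strictly ordered on `[0,T*]`. -/
theorem solutions_separate
    (α T Tstar L y₁₀ y₁₁ y₂₀ y₂₁ : ℝ) (hα₁ : 1 < α) (hα₂ : α < 2)
    (hT : 0 < T) (hL : 0 < L)
    (f : ℝ → ℝ → ℝ)
    (hf_cont : ContinuousOn (fun p : ℝ × ℝ => f p.1 p.2) (Set.Icc 0 T ×ˢ Set.univ))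
    (hf_lip : ∀ t ∈ Set.Icc (0 : ℝ) T, ∀ x y : ℝ, |f t x - f t y| ≤ L * |x - y|)
    (y₁ y₂ : ℝ → ℝ)
    (hy₁cont : ContinuousOn y₁ (Set.Icc 0 T)) (hy₂cont : ContinuousOn y₂ (Set.Icc 0 T))
    (hy₁ : ∀ t ∈ Set.Icc (0 : ℝ) T,
      y₁ t = y₁₀ + y₁₁ * t
        + (1 / Real.Gamma α) * ∫ s in (0 : ℝ)..t, (t - s) ^ (α - 1) * f s (y₁ s))
    (hy₂ : ∀ t ∈ Set.Icc (0 : ℝ) T,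
      y₂ t = y₂₀ + y₂₁ * t
        + (1 / Real.Gamma α) * ∫ s in (0 : ℝ)..t, (t - s) ^ (α - 1) * f s (y₂ s))
    (hTstar : 0 < Tstar) (hTstarT : Tstar ≤ T)
    (hpos₁ : ∀ t ∈ Set.Icc (0 : ℝ) Tstar,
      (y₂₀ - y₁₀) * mlE α 1 (-(L * t ^ α)) + (y₂₁ - y₁₁) * t * mlE α 2 (-(L * t ^ α)) > 0)
    (hpos₂ : ∀ t ∈ Set.Icc (0 : ℝ) Tstar, mlE α α (-(L * t ^ α)) > 0) :
    ∀ t ∈ Set.Icc (0 : ℝ) Tstar, y₁ t < y₂ t := by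
  set a := y₂₀ - y₁₀ with ha_def
  set b := y₂₁ - y₁₁ with hb_def
  set z : ℝ → ℝ := fun t => y₂ t - y₁ t with hz_def
  set g : ℝ → ℝ := fun s => f s (y₂ s) - f s (y₁ s) with hg_def
  have hΓ : 0 < Real.Gamma α := Real.Gamma_pos_of_pos (by linarith)
  have hexp : (0:ℝ) ≤ α - 1 := by linarith
  have hzc : ContinuousOn z (Set.Icc 0 T) := hy₂cont.sub hy₁cont
  have hfy : ∀ (y : ℝ → ℝ), ContinuousOn y (Set.Icc 0 T) →
      ContinuousOn (fun s => f s (y s)) (Set.Icc 0 T) := by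
    intro y hy
    apply hf_cont.comp (continuousOn_id.prodMk hy)
    intro s hs
    exact ⟨hs, Set.mem_univ _⟩
  have hgc : ContinuousOn g (Set.Icc 0 T) :=
    (hfy y₂ hy₂cont).sub (hfy y₁ hy₁cont)
  have hpowc : ∀ t : ℝ, Continuous (fun s : ℝ => (t - s) ^ (α - 1)) := by
    intro t
    exact (Real.continuous_rpow_const hexp).comp (continuous_const.sub continuous_id)
  -- the difference satisfies the integral equation
  have hz : ∀ t ∈ Set.Icc (0 : ℝ) T, z t = a + b * t
      + (1 / Real.Gamma α) * ∫ s in (0 : ℝ)..t, (t - s) ^ (α - 1) * g s := by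
    intro t ht
    have huIcc : Set.uIcc (0:ℝ) t = Set.Icc 0 t := Set.uIcc_of_le ht.1
    have hIccT : Set.Icc (0:ℝ) t ⊆ Set.Icc 0 T := Set.Icc_subset_Icc le_rfl ht.2
    have hi : ∀ (y : ℝ → ℝ), ContinuousOn y (Set.Icc 0 T) →
        IntervalIntegrable (fun s => (t - s) ^ (α - 1) * f s (y s)) MeasureTheory.volume 0 t := by
      intro y hy
      apply ContinuousOn.intervalIntegrable
      rw [huIcc]
      exact ((hpowc t).continuousOn).mul (((hfy y hy)).mono hIccT)
    have hsub : ∫ s in (0:ℝ)..t, (t - s) ^ (α - 1) * g s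
        = (∫ s in (0:ℝ)..t, (t - s) ^ (α - 1) * f s (y₂ s))
          - ∫ s in (0:ℝ)..t, (t - s) ^ (α - 1) * f s (y₁ s) := by
      rw [← intervalIntegral.integral_sub (hi y₂ hy₂cont) (hi y₁ hy₁cont)]
      apply intervalIntegral.integral_congr
      intro s _
      simp only [hg_def]
      ring
    rw [hz_def]
    simp only
    rw [hy₂ t ht, hy₁ t ht, hsub, ha_def, hb_def]
    ring
  -- contradiction setup
  by_contra hcon
  push_neg at hcon
  obtain ⟨t', ht', hle⟩ := hcon
  set S : Set ℝ := Set.Icc 0 Tstar ∩ z ⁻¹' Set.Iic 0 with hS_def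
  have hIccST : Set.Icc (0:ℝ) Tstar ⊆ Set.Icc 0 T := Set.Icc_subset_Icc le_rfl hTstarT
  have hScl : IsClosed S :=
    (hzc.mono hIccST).preimage_isClosed_of_isClosed isClosed_Icc isClosed_Iic
  have hne : S.Nonempty := ⟨t', ht', by simp [hz_def]; linarith⟩
  have hbdd : BddBelow S := ⟨0, fun x hx => hx.1.1⟩
  set t₀ := sInf S with ht₀_def
  have ht₀S : t₀ ∈ S := hScl.csInf_mem hne hbdd
  have ht₀Icc : t₀ ∈ Set.Icc (0:ℝ) Tstar := ht₀S.1
  have hz₀ : z t₀ ≤ 0 := ht₀S.2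
  -- a > 0
  have h0α : (0:ℝ) ^ α = 0 := Real.zero_rpow (by positivity)
  have hE10 : mlE α 1 (-(L * (0:ℝ) ^ α)) = 1 := by
    rw [h0α, mul_zero, neg_zero, mlE]
    rw [tsum_eq_single 0 ?_]
    · norm_num [Real.Gamma_one]
    · intro k hk
      rw [zero_pow hk]
      simp
  have ha : 0 < a := by
    have := hpos₁ 0 ⟨le_rfl, hTstar.le⟩
    rw [hE10] at this
    simpa using this
  have hz0 : z 0 = a := by
    have := hz 0 ⟨le_rfl, hT.le⟩
    simpa [intervalIntegral.integral_same] using this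
  have ht₀pos : 0 < t₀ := by
    rcases ht₀Icc.1.eq_or_lt with h | h
    · exfalso; rw [← h] at hz₀; rw [hz0] at hz₀; linarith
    · exact h
  have hzpos : ∀ u, 0 ≤ u → u < t₀ → 0 < z u := by
    intro u hu0 hut
    by_contra h
    push_neg at h
    have huS : u ∈ S := ⟨⟨hu0, le_trans hut.le ht₀Icc.2⟩, h⟩
    exact notMem_of_lt_csInf hut hbdd huS
  have hIcc0T : Set.Icc (0:ℝ) t₀ ⊆ Set.Icc 0 T :=
    Set.Icc_subset_Icc le_rfl (le_trans ht₀Icc.2 hTstarT)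
  have hgb : ∀ u ∈ Set.Icc (0:ℝ) t₀, |g u| ≤ L * |z u| := by
    intro u hu
    exact hf_lip u (hIcc0T hu) (y₂ u) (y₁ u)
  -- main computation
  have huIcc0 : Set.uIcc (0:ℝ) t₀ = Set.Icc 0 t₀ := Set.uIcc_of_le ht₀pos.le
  have hmlFc : ContinuousOn (mlF α α L) (Set.Icc 0 t₀) := mlF_contOn hα₁ hα₁.le ht₀pos.le
  have hmlF2c : ContinuousOn (mlF α (α+α) L) (Set.Icc 0 t₀) :=
    mlF_contOn hα₁ (by linarith) ht₀pos.le
  have hmap : ∀ s ∈ Set.Icc (0:ℝ) t₀, t₀ - s ∈ Set.Icc (0:ℝ) t₀ := by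
    intro s hs
    exact ⟨by linarith [hs.2], by linarith [hs.1]⟩
  have hsubc : ContinuousOn (fun s : ℝ => t₀ - s) (Set.Icc 0 t₀) :=
    (continuous_const.sub continuous_id).continuousOn
  have hphiC : ContinuousOn (fun s => mlF α α L (t₀ - s)) (Set.Icc 0 t₀) :=
    hmlFc.comp hsubc hmap
  have hphi2C : ContinuousOn (fun s => mlF α (α+α) L (t₀ - s)) (Set.Icc 0 t₀) :=
    hmlF2c.comp hsubc hmap
  have hzc0 : ContinuousOn z (Set.Icc 0 t₀) := hzc.mono hIcc0T
  have hgc0 : ContinuousOn g (Set.Icc 0 t₀) := hgc.mono hIcc0T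
  have iint : ∀ (F : ℝ → ℝ), ContinuousOn F (Set.Icc 0 t₀) →
      IntervalIntegrable F MeasureTheory.volume 0 t₀ := by
    intro F hF
    apply ContinuousOn.intervalIntegrable
    rwa [huIcc0]
  have hlinc : ContinuousOn (fun s : ℝ => a + b * s) (Set.Icc 0 t₀) :=
    (continuous_const.add (continuous_const.mul continuous_id)).continuousOn
  have hpow0C : ContinuousOn (fun u : ℝ => (t₀ - u) ^ (α - 1)) (Set.Icc 0 t₀) :=
    (hpowc t₀).continuousOn
  set A1 : ℝ := ∫ s in (0:ℝ)..t₀, mlF α α L (t₀ - s) * (a + b * s) with hA1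
  set D : ℝ := ∫ u in (0:ℝ)..t₀, mlF α (α+α) L (t₀ - u) * g u with hD
  set B : ℝ := ∫ u in (0:ℝ)..t₀, mlF α α L (t₀ - u) * g u with hB
  set A : ℝ := ∫ s in (0:ℝ)..t₀, mlF α α L (t₀ - s) * z s with hA
  set C3 : ℝ := ∫ u in (0:ℝ)..t₀, (t₀ - u) ^ (α - 1) * g u with hC3
  -- split A
  have hFa : A = A1 + ∫ s in (0:ℝ)..t₀, mlF α α L (t₀ - s) * (z s - (a + b * s)) := by
    rw [hA, hA1, ← intervalIntegral.integral_add (iint (fun s => mlF α α L (t₀ - s) * (a + b * s)) (hphiC.mul hlinc))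
      (iint (fun s => mlF α α L (t₀ - s) * (z s - (a + b * s))) (hphiC.mul (hzc0.sub hlinc)))]
    apply intervalIntegral.integral_congr
    intro s _
    ring
  have hFb : ∫ s in (0:ℝ)..t₀, mlF α α L (t₀ - s) * (z s - (a + b * s))
      = (1/Real.Gamma α) * ∫ s in (0:ℝ)..t₀,
          mlF α α L (t₀ - s) * ∫ u in (0:ℝ)..s, (s - u) ^ (α - 1) * g u := by
    rw [← intervalIntegral.integral_const_mul]
    apply intervalIntegral.integral_congr
    intro s hs
    rw [huIcc0] at hs
    have hzs := hz s (hIcc0T hs)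
    simp only
    rw [hzs]
    ring
  have hinner : ∀ u ∈ Set.Icc (0:ℝ) t₀,
      (∫ s in u..t₀, mlF α α L (t₀ - s) * (s - u) ^ (α-1))
        = Real.Gamma α * mlF α (α+α) L (t₀ - u) := by
    intro u hu
    have h1 : ∫ s in u..t₀, mlF α α L (t₀ - s) * (s - u) ^ (α-1)
        = ∫ s in u..t₀, (fun v => mlF α α L (t₀ - u - v) * v ^ (α-1)) (s - u) := by
      apply intervalIntegral.integral_congr
      intro s _
      simp only
      congr 2
      ring
    have h2 := intervalIntegral.integral_comp_sub_right
      (a := u) (b := t₀) (fun v => mlF α α L (t₀ - u - v) * v ^ (α-1)) u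
    have h2' : ∫ v in (u-u)..(t₀-u), mlF α α L (t₀ - u - v) * v ^ (α-1)
        = ∫ v in (0:ℝ)..(t₀-u), mlF α α L (t₀ - u - v) * v ^ (α-1) := by
      rw [sub_self]
    have h3 : ∫ v in (0:ℝ)..(t₀-u), mlF α α L (t₀ - u - v) * v ^ (α-1)
        = ∫ v in (0:ℝ)..(t₀-u),
            (fun w => mlF α α L w * (t₀ - u - w) ^ (α-1)) (t₀ - u - v) := by
      apply intervalIntegral.integral_congr
      intro v _
      simp only
      congr 2
      ring
    have h4 := intervalIntegral.integral_comp_sub_left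
      (a := (0:ℝ)) (b := t₀ - u) (fun w => mlF α α L w * (t₀ - u - w) ^ (α-1)) (t₀ - u)
    have h4' : ∫ w in (t₀-u-(t₀-u))..(t₀-u-0), mlF α α L w * (t₀ - u - w) ^ (α-1)
        = ∫ w in (0:ℝ)..(t₀-u), mlF α α L w * (t₀ - u - w) ^ (α-1) := by
      rw [sub_self, sub_zero]
    have h5 : ∫ w in (0:ℝ)..(t₀-u), mlF α α L w * (t₀ - u - w) ^ (α-1)
        = ∫ w in (0:ℝ)..(t₀-u), (t₀ - u - w) ^ (α-1) * mlF α α L w := by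
      apply intervalIntegral.integral_congr
      intro w _
      ring
    have h6 := master (β := α) (γ := α) (L := L) (t := t₀ - u)
      hα₁ hα₁.le hα₁.le (by linarith [hu.2] : (0:ℝ) ≤ t₀ - u)
    exact h1.trans (h2.trans (h2'.trans (h3.trans (h4.trans (h4'.trans (h5.trans h6))))))
  have hFe : ∫ u in (0:ℝ)..t₀,
      (∫ s in u..t₀, mlF α α L (t₀ - s) * (s - u)^(α-1)) * g u
        = Real.Gamma α * D := by
    rw [hD, ← intervalIntegral.integral_const_mul]
    apply intervalIntegral.integral_congr
    intro u hu
    rw [huIcc0] at hu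
    simp only
    rw [hinner u hu]
    ring
  -- values of the linear part
  have hJ1 : ∫ s in (0:ℝ)..t₀, mlF α α L (t₀ - s) = mlF α (α+1) L t₀ := by
    have h0 := intervalIntegral.integral_comp_sub_left
      (a := (0:ℝ)) (b := t₀) (mlF α α L) t₀
    have h0' : ∫ w in (t₀-t₀)..(t₀-0), mlF α α L w = ∫ w in (0:ℝ)..t₀, mlF α α L w := by
      rw [sub_self, sub_zero]
    have h : ∫ w in (0:ℝ)..t₀, mlF α α L w
        = ∫ w in (0:ℝ)..t₀, (t₀ - w) ^ ((1:ℝ)-1) * mlF α α L w := by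
      apply intervalIntegral.integral_congr
      intro w _
      norm_num
    have hm := master (β := α) (γ := 1) (L := L) (t := t₀) hα₁ hα₁.le le_rfl ht₀pos.le
    rw [Real.Gamma_one, one_mul] at hm
    exact h0.trans (h0'.trans (h.trans hm))
  have hJ2 : ∫ s in (0:ℝ)..t₀, mlF α α L (t₀ - s) * s = mlF α (α+2) L t₀ := by
    have h1 : ∫ s in (0:ℝ)..t₀, mlF α α L (t₀ - s) * s
        = ∫ s in (0:ℝ)..t₀, (fun w => mlF α α L w * (t₀ - w)) (t₀ - s) := by
      apply intervalIntegral.integral_congr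
      intro s _
      simp only
      congr 1
      ring
    have h2 := intervalIntegral.integral_comp_sub_left
      (a := (0:ℝ)) (b := t₀) (fun w => mlF α α L w * (t₀ - w)) t₀
    have h2' : ∫ w in (t₀-t₀)..(t₀-0), mlF α α L w * (t₀ - w)
        = ∫ w in (0:ℝ)..t₀, mlF α α L w * (t₀ - w) := by
      rw [sub_self, sub_zero]
    have h3 : ∫ w in (0:ℝ)..t₀, mlF α α L w * (t₀ - w)
        = ∫ w in (0:ℝ)..t₀, (t₀ - w)^((2:ℝ)-1) * mlF α α L w := by
      apply intervalIntegral.integral_congr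
      intro w _
      dsimp only
      rw [show (2:ℝ)-1 = 1 by norm_num, Real.rpow_one]
      ring
    have hm := master (β := α) (γ := 2) (L := L) (t := t₀) hα₁ hα₁.le (by norm_num) ht₀pos.le
    rw [Real.Gamma_two, one_mul] at hm
    exact h1.trans (h2.trans (h2'.trans (h3.trans hm)))
  have hA1val : A1 = a * mlF α (α+1) L t₀ + b * mlF α (α+2) L t₀ := by
    have e1 : A1 = ∫ s in (0:ℝ)..t₀,
        (a * mlF α α L (t₀ - s) + b * (mlF α α L (t₀ - s) * s)) := by
      rw [hA1]
      apply intervalIntegral.integral_congr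
      intro s _
      ring
    have e2 := intervalIntegral.integral_add
      (f := fun s => a * mlF α α L (t₀ - s))
      (g := fun s => b * (mlF α α L (t₀ - s) * s))
      (iint _ (continuousOn_const.mul hphiC))
      (iint _ (continuousOn_const.mul (hphiC.mul (continuous_id.continuousOn))))
    have e3 := intervalIntegral.integral_const_mul (a := (0:ℝ)) (b := t₀)
      (μ := MeasureTheory.volume) a (fun s => mlF α α L (t₀ - s))
    have e4 := intervalIntegral.integral_const_mul (a := (0:ℝ)) (b := t₀)
      (μ := MeasureTheory.volume) b (fun s => mlF α α L (t₀ - s) * s)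
    rw [e1, e2, e3, e4, hJ1, hJ2]
  -- shift identities
  have s1 : L * mlF α (α+1) L t₀ = 1 - mlF α 1 L t₀ := by
    have h := mlF_shift (β := 1) (L := L) hα₁ le_rfl ht₀pos.le
    rw [show (1:ℝ)+α = α+1 by ring] at h
    simpa [Real.Gamma_one] using h
  have s2 : L * mlF α (α+2) L t₀ = t₀ - mlF α 2 L t₀ := by
    have h := mlF_shift (β := 2) (L := L) hα₁ (by norm_num) ht₀pos.le
    rw [show (2:ℝ)+α = α+2 by ring, show (2:ℝ)-1 = 1 by norm_num,
      Real.rpow_one, Real.Gamma_two, div_one] at h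
    exact h
  have s3 : ∀ τ : ℝ, 0 ≤ τ → L * mlF α (α+α) L τ
      = τ^(α-1)/Real.Gamma α - mlF α α L τ := by
    intro τ hτ
    exact mlF_shift (β := α) (L := L) hα₁ hα₁.le hτ
  have hF2 : L * D = (1/Real.Gamma α) * C3 - B := by
    rw [hD, hB, hC3, ← intervalIntegral.integral_const_mul,
      ← intervalIntegral.integral_const_mul,
      ← intervalIntegral.integral_sub
        (iint (fun u => 1 / Real.Gamma α * ((t₀ - u) ^ (α - 1) * g u)) (continuousOn_const.mul (hpow0C.mul hgc0)))
        (iint (fun u => mlF α α L (t₀ - u) * g u) (hphiC.mul hgc0))]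
    apply intervalIntegral.integral_congr
    intro u hu
    rw [huIcc0] at hu
    have hs3 := s3 (t₀ - u) (by linarith [hu.2])
    simp only
    rw [show L * (mlF α (α+α) L (t₀-u) * g u) = (L * mlF α (α+α) L (t₀-u)) * g u by ring, hs3]
    field_simp
  have hzt₀ := hz t₀ (hIcc0T ⟨ht₀pos.le, le_rfl⟩)
  have hAval : A = a * mlF α (α+1) L t₀ + b * mlF α (α+2) L t₀ + D := by
    rw [hFa, hA1val, hFb,
      fubini_tri ht₀pos (by linarith : (0:ℝ) < α - 1) hphiC hgc0, hFe,
      one_div, inv_mul_cancel_left₀ (ne_of_gt hΓ)]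
  have hF6 : ∫ u in (0:ℝ)..t₀, mlF α α L (t₀ - u) * (L * z u + g u) = L * A + B := by
    rw [hA, hB, ← intervalIntegral.integral_const_mul,
      ← intervalIntegral.integral_add
        (iint (fun u => L * (mlF α α L (t₀ - u) * z u)) (continuousOn_const.mul (hphiC.mul hzc0)))
        (iint (fun u => mlF α α L (t₀ - u) * g u) (hphiC.mul hgc0))]
    apply intervalIntegral.integral_congr
    intro u _
    simp only
    ring
  have hkey : z t₀ = (a * mlF α 1 L t₀ + b * mlF α 2 L t₀)
      + ∫ u in (0:ℝ)..t₀, mlF α α L (t₀ - u) * (L * z u + g u) := by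
    rw [hF6]
    have e : L * A + B = z t₀ - (a * mlF α 1 L t₀ + b * mlF α 2 L t₀) := by
      rw [hAval]
      calc L * (a * mlF α (α+1) L t₀ + b * mlF α (α+2) L t₀ + D) + B
          = a * (L * mlF α (α+1) L t₀) + b * (L * mlF α (α+2) L t₀) + (L * D + B) := by ring
        _ = a * (1 - mlF α 1 L t₀) + b * (t₀ - mlF α 2 L t₀)
            + ((1/Real.Gamma α) * C3 - B + B) := by rw [s1, s2, hF2]
        _ = (a + b * t₀ + (1/Real.Gamma α) * C3)
            - (a * mlF α 1 L t₀ + b * mlF α 2 L t₀) := by ring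
        _ = z t₀ - (a * mlF α 1 L t₀ + b * mlF α 2 L t₀) := by rw [← hzt₀]
    linarith [e]
  have hInt_nonneg : 0 ≤ ∫ u in (0:ℝ)..t₀, mlF α α L (t₀ - u) * (L * z u + g u) := by
    apply intervalIntegral.integral_nonneg ht₀pos.le
    intro u hu
    rcases hu.2.eq_or_lt with he | hlt
    · rw [he, sub_self, mlF_zero hα₁ hα₁, zero_mul]
    · have hτpos : 0 < t₀ - u := by linarith
      have hτT : t₀ - u ∈ Set.Icc (0:ℝ) Tstar := ⟨hτpos.le, by linarith [ht₀Icc.2, hu.1]⟩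
      have hmlF_nonneg : 0 ≤ mlF α α L (t₀ - u) := by
        rw [mlF_eq_mlE hτpos]
        have h1 := hpos₂ (t₀ - u) hτT
        have h2 := Real.rpow_nonneg hτpos.le (α - 1)
        positivity
      have hzu : 0 < z u := hzpos u hu.1 hlt
      have hb := hgb u ⟨hu.1, hu.2⟩
      rw [abs_of_pos hzu] at hb
      have hgl : -(L * z u) ≤ g u := (abs_le.mp hb).1
      exact mul_nonneg hmlF_nonneg (by linarith)
  have hbr1 : mlF α 1 L t₀ = mlE α 1 (-(L * t₀ ^ α)) := by
    rw [mlF_eq_mlE ht₀pos]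
    norm_num
  have hbr2 : mlF α 2 L t₀ = t₀ * mlE α 2 (-(L * t₀ ^ α)) := by
    rw [mlF_eq_mlE ht₀pos, show (2:ℝ)-1 = 1 by norm_num, Real.rpow_one]
  have hWpos : 0 < a * mlF α 1 L t₀ + b * mlF α 2 L t₀ := by
    have h := hpos₁ t₀ ht₀Icc
    have e : a * mlF α 1 L t₀ + b * mlF α 2 L t₀
        = a * mlE α 1 (-(L * t₀ ^ α)) + b * t₀ * mlE α 2 (-(L * t₀ ^ α)) := by
      rw [hbr1, hbr2]
      ring
    rw [e]
    exact h
  linarith [hz₀, hkey, hInt_nonneg, hWpos]
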